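/- Complex conjugation property of the quantum dilogarithm: conj(G_b(x)) = 1/G_b(Q − conj(x)) for every x ∈ ℂ away from poles and zeros; in particular |G_b(Q/2 + i x)| = 1 for every real x. -/

import Mathlib

noncomputable section

open Complex MeasureTheory Filter Real
open Topology

/-- The integrand of the contour-integral defining the quantum dilogarithm:
`e^{πtz} / ((e^{πbt}−1)(e^{πb⁻¹t}−1) t)`. -/
def qdIntegrand (b : ℝ) (z t : ℂ) : ℂ :=
  Complex.exp (↑π * t * z) /
    ((Complex.exp (↑π * ↑b * t) - 1) * (Complex.exp (↑π * (↑b)⁻¹ * t) - 1) * t)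

/-- Radius of the small semicircle above `t = 0` (any sufficiently small radius
gives the same value; we fix one symmetric in `b ↔ b⁻¹`). -/
def qdRadius (b : ℝ) : ℝ := min b b⁻¹ / 2

/-- The contour integral `∫_Ω e^{πtz}/((e^{πbt}−1)(e^{πb⁻¹t}−1)) dt/t`, where
the contour `Ω` runs along `ℝ` from `−∞` to `+∞`, deformed by a small semicircle
passing above the singularity at `t = 0`. -/
def qdContour (b : ℝ) (z : ℂ) : ℂ :=
  (∫ t in Set.Iic (-(qdRadius b)), qdIntegrand b z (t : ℂ)) +
  (∫ t in Set.Ici (qdRadius b), qdIntegrand b z (t : ℂ)) -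
  Complex.I * ∫ θ in (0:ℝ)..π,
    qdIntegrand b z ((qdRadius b : ℂ) * Complex.exp (Complex.I * (θ : ℝ))) *
      ((qdRadius b : ℂ) * Complex.exp (Complex.I * (θ : ℝ)))

/-- `ζ_b = exp((πi/2)((b² + b^{-2})/6 + 1/2))`. -/
def zetab (b : ℝ) : ℂ :=
  Complex.exp (↑π * Complex.I / 2 * (((b : ℂ)^2 + ((b : ℂ)⁻¹)^2) / 6 + 1 / 2))

/-- `Q = b + b⁻¹`. -/
def Qb (b : ℝ) : ℝ := b + b⁻¹

/-- The quantum dilogarithm on the strip `0 < Re z < Q`: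
`G_b(z) = conj(ζ_b) · exp(−∫_Ω …)`. -/
def Gstrip (b : ℝ) (z : ℂ) : ℂ :=
  (starRingEnd ℂ) (zetab b) * Complex.exp (-qdContour b z)

/-- `G : ℂ → ℂ` is (a representative of) the meromorphic continuation of the
quantum dilogarithm `G_b`: it is meromorphic on all of `ℂ`, analytic away from
the lattice `{−nb − mb⁻¹ : n, m ∈ ℤ≥0}` of poles, and agrees with the
contour-integral formula on the strip `0 < Re z < Q`. -/
def IsGb (b : ℝ) (G : ℂ → ℂ) : Prop :=
  (∀ z : ℂ, MeromorphicAt G z) ∧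
  (∀ z : ℂ, (∀ n m : ℕ, z ≠ -(n : ℂ) * (b : ℂ) - (m : ℂ) * ((b : ℂ))⁻¹) →
    AnalyticAt ℂ G z) ∧
  (∀ z : ℂ, 0 < z.re → z.re < Qb b → G z = Gstrip b z)


lemma qdIntegrand_conj (b : ℝ) (z t : ℂ) :
    (starRingEnd ℂ) (qdIntegrand b z t) = qdIntegrand b ((starRingEnd ℂ) z) ((starRingEnd ℂ) t) := by
  simp only [qdIntegrand, map_div₀, map_mul, map_sub, map_one, ← Complex.exp_conj,
    Complex.conj_ofReal, map_inv₀]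

lemma qdIntegrand_neg (b : ℝ) (z t : ℂ) :
    qdIntegrand b z (-t) = -qdIntegrand b ((Qb b : ℂ) - z) t := by
  set A := Complex.exp (↑π * ↑b * t) with hA
  set B := Complex.exp (↑π * (↑b)⁻¹ * t) with hB
  have hAne : A ≠ 0 := Complex.exp_ne_zero _
  have hBne : B ≠ 0 := Complex.exp_ne_zero _
  have e1 : Complex.exp (↑π * ↑b * (-t)) = A⁻¹ := by
    rw [hA, ← Complex.exp_neg]; congr 1; ring
  have e2 : Complex.exp (↑π * (↑b)⁻¹ * (-t)) = B⁻¹ := by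
    rw [hB, ← Complex.exp_neg]; congr 1; ring
  have e3 : Complex.exp (↑π * t * ((Qb b : ℂ) - z)) = A * B * Complex.exp (↑π * (-t) * z) := by
    rw [hA, hB, ← Complex.exp_add, ← Complex.exp_add]
    congr 1
    have : ((Qb b : ℝ) : ℂ) = (b : ℂ) + ((b : ℂ))⁻¹ := by
      push_cast [Qb]; ring
    rw [this]; ring
  simp only [qdIntegrand, e1, e2, e3]
  have hD : (A⁻¹ - 1) * (B⁻¹ - 1) * (-t) = -(A * B)⁻¹ * ((A - 1) * (B - 1) * t) := by
    have h1 : A⁻¹ - 1 = (1 - A) / A := by field_simp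
    have h2 : B⁻¹ - 1 = (1 - B) / B := by field_simp
    rw [h1, h2, mul_inv]
    field_simp
    ring
  rw [hD, ← inv_neg, div_mul_eq_div_div_swap, div_eq_mul_inv _ ((-(A*B))⁻¹), inv_inv, ← hA, ← hB]
  ring

lemma intervalIntegral_conj {f : ℝ → ℂ} {a b : ℝ} :
    ∫ x in a..b, (starRingEnd ℂ) (f x) = (starRingEnd ℂ) (∫ x in a..b, f x) := by
  simp only [intervalIntegral, integral_conj, map_sub]

lemma qdIntegrand_neg' (b : ℝ) (z t : ℂ) :
    qdIntegrand b z t = -qdIntegrand b ((Qb b : ℂ) - z) (-t) := by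
  have := qdIntegrand_neg b z (-t)
  rwa [neg_neg] at this

lemma qdContour_conj (b : ℝ) (z : ℂ) :
    (starRingEnd ℂ) (qdContour b z) = -qdContour b ((Qb b : ℂ) - (starRingEnd ℂ) z) := by
  set w : ℂ := (Qb b : ℂ) - (starRingEnd ℂ) z with hw
  set r : ℝ := qdRadius b with hr
  have key : ∀ s : ℂ, qdIntegrand b ((starRingEnd ℂ) z) s = -qdIntegrand b w (-s) :=
    fun s => qdIntegrand_neg' b ((starRingEnd ℂ) z) s
  have hA1 : (starRingEnd ℂ) (∫ t in Set.Iic (-r), qdIntegrand b z (t : ℂ))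
      = -∫ t in Set.Ici r, qdIntegrand b w (t : ℂ) := by
    rw [← integral_conj]
    have h1 : ∀ t : ℝ, (starRingEnd ℂ) (qdIntegrand b z (t : ℂ))
        = qdIntegrand b ((starRingEnd ℂ) z) (t : ℂ) := by
      intro t; rw [qdIntegrand_conj, Complex.conj_ofReal]
    simp only [h1]
    have h2 := integral_comp_neg_Iic (-r) (fun x : ℝ => qdIntegrand b ((starRingEnd ℂ) z) (↑(-x) : ℂ))
    simp only [neg_neg] at h2
    rw [h2, ← integral_Ici_eq_integral_Ioi]
    simp only [key, Complex.ofReal_neg, neg_neg, integral_neg]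
  have hA2 : (starRingEnd ℂ) (∫ t in Set.Ici r, qdIntegrand b z (t : ℂ))
      = -∫ t in Set.Iic (-r), qdIntegrand b w (t : ℂ) := by
    rw [← integral_conj]
    have h1 : ∀ t : ℝ, (starRingEnd ℂ) (qdIntegrand b z (t : ℂ))
        = qdIntegrand b ((starRingEnd ℂ) z) (t : ℂ) := by
      intro t; rw [qdIntegrand_conj, Complex.conj_ofReal]
    simp only [h1]
    have h2 := integral_comp_neg_Iic (-r) (fun x : ℝ => qdIntegrand b ((starRingEnd ℂ) z) ((x : ℝ) : ℂ))
    rw [neg_neg] at h2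
    rw [integral_Ici_eq_integral_Ioi, ← h2]
    simp only [key, Complex.ofReal_neg, neg_neg, integral_neg]
  have hS : (starRingEnd ℂ) (Complex.I * ∫ θ in (0:ℝ)..π,
        qdIntegrand b z ((r : ℂ) * Complex.exp (Complex.I * (θ : ℝ))) *
          ((r : ℂ) * Complex.exp (Complex.I * (θ : ℝ))))
      = -(Complex.I * ∫ θ in (0:ℝ)..π,
        qdIntegrand b w ((r : ℂ) * Complex.exp (Complex.I * (θ : ℝ))) *
          ((r : ℂ) * Complex.exp (Complex.I * (θ : ℝ)))) := by
    rw [map_mul, Complex.conj_I, ← intervalIntegral_conj]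
    have hpt : ∀ θ : ℝ, (starRingEnd ℂ) (qdIntegrand b z ((r : ℂ) * Complex.exp (Complex.I * (θ : ℝ))) *
          ((r : ℂ) * Complex.exp (Complex.I * (θ : ℝ))))
        = qdIntegrand b w ((r : ℂ) * Complex.exp (Complex.I * ((π - θ : ℝ) : ℂ))) *
          ((r : ℂ) * Complex.exp (Complex.I * ((π - θ : ℝ) : ℂ))) := by
      intro θ
      have hc : (starRingEnd ℂ) ((r : ℂ) * Complex.exp (Complex.I * (θ : ℝ)))
          = (r : ℂ) * Complex.exp (-(Complex.I * (θ : ℝ))) := by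
        rw [map_mul, Complex.conj_ofReal, ← Complex.exp_conj, map_mul, Complex.conj_I,
          Complex.conj_ofReal, neg_mul]
      have hrefl : (r : ℂ) * Complex.exp (Complex.I * ((π - θ : ℝ) : ℂ))
          = -((r : ℂ) * Complex.exp (-(Complex.I * (θ : ℝ)))) := by
        have hexp : Complex.exp (Complex.I * (((π - θ : ℝ)) : ℂ))
            = -Complex.exp (-(Complex.I * (θ : ℝ))) := by
          have harg : Complex.I * (((π - θ : ℝ)) : ℂ)
              = (π : ℂ) * Complex.I + (-(Complex.I * (θ : ℝ))) := by
            push_cast; ring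
          rw [harg, Complex.exp_add, Complex.exp_pi_mul_I]; ring
        rw [hexp]; ring
      rw [map_mul, qdIntegrand_conj, hc, hrefl]
      rw [key]
      ring_nf
    rw [intervalIntegral.integral_congr (g := fun θ : ℝ =>
      qdIntegrand b w ((r : ℂ) * Complex.exp (Complex.I * ((π - θ : ℝ) : ℂ))) *
        ((r : ℂ) * Complex.exp (Complex.I * ((π - θ : ℝ) : ℂ)))) (fun θ _ => hpt θ)]
    rw [intervalIntegral.integral_comp_sub_left (fun θ : ℝ =>
      qdIntegrand b w ((r : ℂ) * Complex.exp (Complex.I * (θ : ℝ))) *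
        ((r : ℂ) * Complex.exp (Complex.I * (θ : ℝ)))) π]
    simp only [sub_self, sub_zero]
    ring
  calc (starRingEnd ℂ) (qdContour b z)
      = (starRingEnd ℂ) (∫ t in Set.Iic (-r), qdIntegrand b z (t : ℂ))
        + (starRingEnd ℂ) (∫ t in Set.Ici r, qdIntegrand b z (t : ℂ))
        - (starRingEnd ℂ) (Complex.I * ∫ θ in (0:ℝ)..π,
            qdIntegrand b z ((r : ℂ) * Complex.exp (Complex.I * (θ : ℝ))) *
              ((r : ℂ) * Complex.exp (Complex.I * (θ : ℝ)))) := by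
        simp only [qdContour, map_sub, map_add, hr]
    _ = -qdContour b w := by
        rw [hA1, hA2, hS, qdContour, ← hr]
        ring

lemma zetab_conj_mul (b : ℝ) : (starRingEnd ℂ) (zetab b) * zetab b = 1 := by
  rw [zetab, ← Complex.exp_conj, ← Complex.exp_add]
  have : (starRingEnd ℂ) (↑π * Complex.I / 2 * (((b : ℂ)^2 + ((b : ℂ)⁻¹)^2) / 6 + 1 / 2))
      = -(↑π * Complex.I / 2 * (((b : ℂ)^2 + ((b : ℂ)⁻¹)^2) / 6 + 1 / 2)) := by
    simp only [map_mul, map_div₀, map_add, map_pow, map_inv₀, map_one, map_ofNat,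
      Complex.conj_ofReal, Complex.conj_I]
    ring
  rw [this, neg_add_cancel, Complex.exp_zero]

lemma Gstrip_conj_mul (b : ℝ) (z : ℂ) :
    (starRingEnd ℂ) (Gstrip b z) * Gstrip b ((Qb b : ℂ) - (starRingEnd ℂ) z) = 1 := by
  simp only [Gstrip, map_mul, Complex.conj_conj, ← Complex.exp_conj, map_neg, qdContour_conj]
  rw [neg_neg]
  have hz := zetab_conj_mul b
  calc zetab b * Complex.exp (qdContour b ((Qb b : ℂ) - (starRingEnd ℂ) z)) *
        ((starRingEnd ℂ) (zetab b) * Complex.exp (-qdContour b ((Qb b : ℂ) - (starRingEnd ℂ) z)))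
      = ((starRingEnd ℂ) (zetab b) * zetab b) *
        (Complex.exp (qdContour b ((Qb b : ℂ) - (starRingEnd ℂ) z)) *
         Complex.exp (-qdContour b ((Qb b : ℂ) - (starRingEnd ℂ) z))) := by ring
    _ = 1 := by rw [hz, ← Complex.exp_add, add_neg_cancel, Complex.exp_zero, one_mul]

lemma hasDerivAt_conj_conj {f : ℂ → ℂ} {c d : ℂ} (h : HasDerivAt f d ((starRingEnd ℂ) c)) :
    HasDerivAt (fun w => (starRingEnd ℂ) (f ((starRingEnd ℂ) w))) ((starRingEnd ℂ) d) c := by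
  rw [hasDerivAt_iff_tendsto_slope] at h ⊢
  have hconj : Tendsto (fun w : ℂ => (starRingEnd ℂ) w) (𝓝[≠] c) (𝓝[≠] ((starRingEnd ℂ) c)) := by
    rw [tendsto_nhdsWithin_iff]
    constructor
    · exact (Complex.continuous_conj.tendsto c).mono_left nhdsWithin_le_nhds
    · filter_upwards [eventually_mem_nhdsWithin] with x hx
      simp only [Set.mem_compl_iff, Set.mem_singleton_iff] at hx ⊢
      exact fun hc => hx ((starRingEnd ℂ).injective hc)
  have heq : ∀ w : ℂ, slope (fun w => (starRingEnd ℂ) (f ((starRingEnd ℂ) w))) c w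
      = (starRingEnd ℂ) (slope f ((starRingEnd ℂ) c) ((starRingEnd ℂ) w)) := by
    intro w
    simp only [slope_def_field, map_div₀, map_sub, Complex.conj_conj]
  have := (Complex.continuous_conj.tendsto d).comp (h.comp hconj)
  convert this using 1
  funext w
  exact heq w

lemma analyticAt_conj_conj {f : ℂ → ℂ} {c : ℂ} (h : AnalyticAt ℂ f ((starRingEnd ℂ) c)) :
    AnalyticAt ℂ (fun w => (starRingEnd ℂ) (f ((starRingEnd ℂ) w))) c := by
  obtain ⟨r, hr, hball⟩ := Metric.eventually_nhds_iff_ball.1 h.eventually_analyticAt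
  have hdiff : DifferentiableOn ℂ (fun w => (starRingEnd ℂ) (f ((starRingEnd ℂ) w)))
      (Metric.ball c r) := by
    intro y hy
    have hyb : (starRingEnd ℂ) y ∈ Metric.ball ((starRingEnd ℂ) c) r := by
      rw [Metric.mem_ball] at hy ⊢
      simpa [Complex.dist_conj_conj] using hy
    have hfy : AnalyticAt ℂ f ((starRingEnd ℂ) y) := hball _ hyb
    have := (hfy.differentiableAt.hasDerivAt)
    exact (hasDerivAt_conj_conj this).differentiableAt.differentiableWithinAt
  exact hdiff.analyticAt (Metric.ball_mem_nhds c hr)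

/-- Complex conjugation property of the quantum dilogarithm:
`conj(G_b(x)) = 1/G_b(Q − conj(x))` away from poles and zeros; in particular
`|G_b(Q/2 + ix)| = 1` for every real `x`. -/
theorem Gb_complex_conjugation (b : ℝ) (hb0 : 0 < b) (hb1 : b < 1)
    (hirr : Irrational (b ^ 2)) (G : ℂ → ℂ) (hG : IsGb b G) :
    (∀ x : ℂ, AnalyticAt ℂ G x → AnalyticAt ℂ G ((Qb b : ℂ) - (starRingEnd ℂ) x) →
      G x ≠ 0 → G ((Qb b : ℂ) - (starRingEnd ℂ) x) ≠ 0 →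
      (starRingEnd ℂ) (G x) = (G ((Qb b : ℂ) - (starRingEnd ℂ) x))⁻¹) ∧
    (∀ x : ℝ, ‖G ((Qb b : ℂ) / 2 + Complex.I * (x : ℂ))‖ = 1) := by
  obtain ⟨hmero, hana, hstrip⟩ := hG
  have hbinv : 0 < b⁻¹ := inv_pos.2 hb0
  have hQbPos : 0 < Qb b := add_pos hb0 hbinv
  -- lattice points have nonpositive real part
  have hlat : ∀ n m : ℕ, (-(n : ℂ) * (b : ℂ) - (m : ℂ) * ((b : ℂ))⁻¹)
      = (((-((n : ℝ) * b + (m : ℝ) * b⁻¹)) : ℝ) : ℂ) := by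
    intro n m; push_cast; ring
  have hlatle : ∀ n m : ℕ, -((n : ℝ) * b + (m : ℝ) * b⁻¹) ≤ 0 := by
    intro n m
    have h1 : 0 ≤ (n : ℝ) * b := mul_nonneg (Nat.cast_nonneg n) hb0.le
    have h2 : 0 ≤ (m : ℝ) * b⁻¹ := mul_nonneg (Nat.cast_nonneg m) hbinv.le
    linarith
  have hana_pos : ∀ y : ℂ, 0 < y.re → AnalyticAt ℂ G y := by
    intro y hy
    apply hana
    intro n m heq
    rw [hlat] at heq
    have hre : y.re = -((n : ℝ) * b + (m : ℝ) * b⁻¹) := by rw [heq, Complex.ofReal_re]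
    linarith [hlatle n m]
  -- the function Ψ
  set Ψ : ℂ → ℂ := fun y => (starRingEnd ℂ) (G ((starRingEnd ℂ) y)) * G ((Qb b : ℂ) - y)
    with hΨdef
  have hΨstrip : ∀ y : ℂ, 0 < y.re → y.re < Qb b → Ψ y = 1 := by
    intro y h1 h2
    have hc1 : ((starRingEnd ℂ) y).re = y.re := Complex.conj_re y
    have e1 : G ((starRingEnd ℂ) y) = Gstrip b ((starRingEnd ℂ) y) :=
      hstrip _ (by rw [hc1]; exact h1) (by rw [hc1]; exact h2)
    have hre2 : ((Qb b : ℂ) - y).re = Qb b - y.re := by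
      simp [Complex.sub_re, Complex.ofReal_re]
    have e2 : G ((Qb b : ℂ) - y) = Gstrip b ((Qb b : ℂ) - y) :=
      hstrip _ (by rw [hre2]; linarith) (by rw [hre2]; linarith)
    have key := Gstrip_conj_mul b ((starRingEnd ℂ) y)
    rw [Complex.conj_conj] at key
    simp only [hΨdef, e1, e2]
    exact key
  -- the open set where Ψ is analytic
  set U : Set ℂ := {y | AnalyticAt ℂ G ((starRingEnd ℂ) y)} ∩
      {y | AnalyticAt ℂ G ((Qb b : ℂ) - y)} with hUdef
  have hΨana : AnalyticOnNhd ℂ Ψ U := by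
    intro y hy
    have h1 : AnalyticAt ℂ (fun w => (starRingEnd ℂ) (G ((starRingEnd ℂ) w))) y :=
      analyticAt_conj_conj hy.1
    have h2 : AnalyticAt ℂ (fun w : ℂ => G ((Qb b : ℂ) - w)) y := by
      have ha : AnalyticAt ℂ (fun w : ℂ => (Qb b : ℂ) - w) y := analyticAt_const.sub analyticAt_id
      simpa [Function.comp_def] using (hy.2 : AnalyticAt ℂ G ((Qb b : ℂ) - y)).comp ha
    exact h1.mul h2
  -- countable bad set
  set L : ℕ × ℕ → ℂ := fun p => -(p.1 : ℂ) * (b : ℂ) - (p.2 : ℂ) * ((b : ℂ))⁻¹ with hLdef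
  set R : Set ℂ := Set.range L ∪ Set.range (fun p => (Qb b : ℂ) - L p) with hRdef
  have hRc : R.Countable := (Set.countable_range _).union (Set.countable_range _)
  have hVconn : IsPreconnected Rᶜ :=
    (hRc.isPathConnected_compl_of_one_lt_rank
      (rank_real_complex ▸ Nat.one_lt_ofNat)).isConnected.isPreconnected
  have hVsubU : Rᶜ ⊆ U := by
    intro y hy
    constructor
    · apply hana
      intro n m heq
      have hLreal : (starRingEnd ℂ) (L (n, m)) = L (n, m) := by
        simp only [hLdef, map_sub, map_neg, map_mul, map_inv₀, Complex.conj_ofReal, map_natCast]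
      have hy' : y = L (n, m) := by
        have h := congrArg (starRingEnd ℂ) heq
        rwa [Complex.conj_conj, hLreal] at h
      exact hy (Or.inl ⟨(n, m), hy'.symm⟩)
    · apply hana
      intro n m heq
      have hy' : y = (Qb b : ℂ) - L (n, m) := by
        have : (Qb b : ℂ) - y = L (n, m) := heq
        rw [← this]; ring
      exact hy (Or.inr ⟨(n, m), hy'.symm⟩)
  have hUconn : IsPreconnected U := by
    apply hVconn.subset_closure hVsubU
    have hd : Dense Rᶜ := hRc.dense_compl ℂ
    intro y _
    exact hd y
  -- the strip is open and contains Q/2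
  have hQ2 : ((Qb b : ℂ) / 2) = (((Qb b / 2 : ℝ)) : ℂ) := by push_cast; ring
  have hQ2re : ((Qb b : ℂ) / 2).re = Qb b / 2 := by rw [hQ2, Complex.ofReal_re]
  have hQ2U : ((Qb b : ℂ) / 2) ∈ U := by
    constructor
    · show AnalyticAt ℂ G ((starRingEnd ℂ) ((Qb b : ℂ) / 2))
      have : (starRingEnd ℂ) ((Qb b : ℂ) / 2) = (Qb b : ℂ) / 2 := by
        rw [hQ2, Complex.conj_ofReal]
      rw [this]
      exact hana_pos _ (by rw [hQ2re]; positivity)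
    · show AnalyticAt ℂ G ((Qb b : ℂ) - (Qb b : ℂ) / 2)
      have : (Qb b : ℂ) - (Qb b : ℂ) / 2 = (Qb b : ℂ) / 2 := by ring
      rw [this]
      exact hana_pos _ (by rw [hQ2re]; positivity)
  have hEv : Ψ =ᶠ[𝓝 ((Qb b : ℂ) / 2)] (fun _ => (1 : ℂ)) := by
    have hSopen : IsOpen {y : ℂ | 0 < y.re ∧ y.re < Qb b} :=
      (isOpen_lt continuous_const Complex.continuous_re).inter
        (isOpen_lt Complex.continuous_re continuous_const)
    have hmem : ((Qb b : ℂ) / 2) ∈ {y : ℂ | 0 < y.re ∧ y.re < Qb b} := by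
      constructor <;> rw [hQ2re] <;> [positivity; linarith]
    filter_upwards [hSopen.mem_nhds hmem] with y hy
    exact hΨstrip y hy.1 hy.2
  have hEqOn : Set.EqOn Ψ (fun _ => (1 : ℂ)) U :=
    hΨana.eqOn_of_preconnected_of_eventuallyEq analyticOnNhd_const hUconn hQ2U hEv
  have part1 : ∀ x : ℂ, AnalyticAt ℂ G x →
      AnalyticAt ℂ G ((Qb b : ℂ) - (starRingEnd ℂ) x) →
      G x ≠ 0 → G ((Qb b : ℂ) - (starRingEnd ℂ) x) ≠ 0 →
      (starRingEnd ℂ) (G x) = (G ((Qb b : ℂ) - (starRingEnd ℂ) x))⁻¹ := by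
    intro x hx1 hx2 _ _
    have hy0 : (starRingEnd ℂ) x ∈ U := by
      constructor
      · show AnalyticAt ℂ G ((starRingEnd ℂ) ((starRingEnd ℂ) x))
        rwa [Complex.conj_conj]
      · exact hx2
    have h := hEqOn hy0
    simp only [hΨdef, Complex.conj_conj] at h
    exact eq_inv_of_mul_eq_one_left h
  refine ⟨part1, ?_⟩
  intro x
  set p : ℂ := (Qb b : ℂ) / 2 + Complex.I * (x : ℂ) with hpdef
  have hpre : p.re = Qb b / 2 := by
    simp [hpdef, Complex.add_re, Complex.mul_re, Complex.I_re, Complex.I_im,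
      Complex.ofReal_im, Complex.ofReal_re, hQ2re]
  have hkey : (Qb b : ℂ) - (starRingEnd ℂ) p = p := by
    simp only [hpdef, map_add, map_mul, map_div₀, Complex.conj_ofReal, Complex.conj_I, map_ofNat]
    ring
  have hA : AnalyticAt ℂ G p := hana_pos p (by rw [hpre]; positivity)
  have hGp : G p = Gstrip b p :=
    hstrip p (by rw [hpre]; positivity) (by rw [hpre]; linarith)
  have hne : G p ≠ 0 := by
    rw [hGp, Gstrip]
    apply mul_ne_zero
    · simp only [ne_eq, map_eq_zero]
      exact Complex.exp_ne_zero _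
    · exact Complex.exp_ne_zero _
  have h1 := part1 p hA (by rw [hkey]; exact hA) hne (by rw [hkey]; exact hne)
  rw [hkey] at h1
  have habs : ‖G p‖ ^ 2 = 1 := by
    have hm := Complex.mul_conj (G p)
    rw [h1, mul_inv_cancel₀ hne] at hm
    have hnormSq : Complex.normSq (G p) = 1 := by exact_mod_cast hm.symm
    rw [Complex.sq_norm, hnormSq]
  have hnn := norm_nonneg (G p)
  nlinarith


end
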